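/- arXiv:1910.01908 — 2 statements merged into one kernel-verified Lean document; each statement's English description precedes it below -/
import Mathlib

section
/- For any positive integer t, the polynomial x^{2t} - 2^t over ℚ factors as the product over all divisors d of t of the polynomials Θ_d(x), where Θ_d(x) = 2^{φ(d)} Φ_d(x²/2) and Φ_d is the d-th cyclotomic polynomial. -/
open Polynomial in
/-- `Θ_d(x) = 2^{φ(d)} Φ_d(x²/2)`. -/
noncomputable def Theta (d : ℕ) : ℚ[X] :=
  (2 : ℚ) ^ d.totient • (cyclotomic d ℚ).comp (C (2⁻¹) * X ^ 2)

open Polynomial in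
theorem stmt_9 (t : ℕ) (ht : 0 < t) :
    (X ^ (2 * t) - C ((2 : ℚ) ^ t)) = ∏ d ∈ t.divisors, Theta d := by
  have h1 : ∀ d, Theta d = C ((2:ℚ) ^ d.totient) * (cyclotomic d ℚ).comp (C (2⁻¹) * X ^ 2) := by
    intro d; rw [Theta, smul_eq_C_mul]
  simp only [h1]
  rw [Finset.prod_mul_distrib, ← prod_comp, prod_cyclotomic_eq_X_pow_sub_one ht]
  simp only [C_pow, Finset.prod_pow_eq_pow_sum, Nat.sum_totient]
  rw [sub_comp, pow_comp, X_comp, one_comp, mul_pow, ← C_pow, ← pow_mul, mul_sub,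
    mul_one, ← mul_assoc, ← C_pow, ← C_mul]
  norm_num [← mul_pow, ← C_mul]
end

section
/- Let e ≥ 5 be an odd integer and consider the projective plane curve X' over an algebraically closed field of characteristic 2 defined by a homogeneous degree-e polynomial Q(x,y,z) = P̄(x,z) + y z^{e-1} + y² z^{e-2}, where P̄(x,z) is a homogeneous degree-e polynomial in x, z containing the monomial x^e and only even powers of z. Then the singular locus of X' is exactly the single point [0:1:0]. -/
open MvPolynomial in
theorem stmt_19 (K : Type*) [Field K] [IsAlgClosed K] [CharP K 2]
    (e : ℕ) (he : 5 ≤ e) (hodd : Odd e) (c : ℕ → K)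
    (Pbar : MvPolynomial (Fin 3) K)
    (hPbar : Pbar = X 0 ^ e +
      ∑ j ∈ Finset.Icc 1 ((e - 1) / 2), C (c j) * X 0 ^ (e - 2 * j) * X 2 ^ (2 * j))
    (Q : MvPolynomial (Fin 3) K)
    (hQ : Q = Pbar + X 1 * X 2 ^ (e - 1) + X 1 ^ 2 * X 2 ^ (e - 2)) :
    eval ![0, 1, 0] Q = 0 ∧
    ∀ p : Fin 3 → K, p ≠ 0 → eval p Q = 0 →
      ((∀ i, eval p (pderiv i Q) = 0) ↔ (p 0 = 0 ∧ p 2 = 0)) := by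
  subst hPbar hQ
  have h2 : (2 : K) = 0 := by
    have := CharP.cast_eq_zero K 2; exact_mod_cast this
  have he1 : e - 1 ≠ 0 := by omega
  have he2 : e - 2 ≠ 0 := by omega
  have he3 : e - 3 ≠ 0 := by omega
  constructor
  · simp [zero_pow (by omega : e ≠ 0), zero_pow he1, zero_pow he2]
    exact Finset.sum_eq_zero fun j hj => by
      simp [zero_pow (by simp at hj; omega : 2 * j ≠ 0)]
  · intro p hp hQ0
    constructor
    · intro hder
      have h1 := hder 1
      simp [pderiv_mul, pderiv_pow, pderiv_X_self, pderiv_X_of_ne, h2] at h1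
      have hp2 : p 2 = 0 := h1.1
      refine ⟨?_, hp2⟩
      have hsum : ∑ j ∈ Finset.Icc 1 ((e - 1) / 2),
          (c j) * p 0 ^ (e - 2 * j) * (0:K) ^ (2 * j) = 0 :=
        Finset.sum_eq_zero fun j hj => by
          simp [zero_pow (by simp at hj; omega : 2 * j ≠ 0)]
      simp [hp2, zero_pow he1, zero_pow he2, hsum] at hQ0
      exact hQ0.1
    · rintro ⟨hp0, hp2⟩ i
      fin_cases i <;>
        simp [pderiv_mul, pderiv_pow, pderiv_X_self, pderiv_X_of_ne, h2, hp0, hp2,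
          zero_pow he1, zero_pow he2, zero_pow he3,
          zero_pow (show e - 1 - 1 ≠ 0 by omega), zero_pow (show e - 2 - 1 ≠ 0 by omega)]
      exact Finset.sum_eq_zero fun j hj => by
        simp [zero_pow (by simp at hj; omega : 2 * j ≠ 0)]
end
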